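/- Let R and K be symmetric p×p matrices where R_{ij} ≥ 0 for all i,j and K_{ij} ≤ 0 for all i ≠ j. Then for any diagonal sign matrix D (D_{ii} ∈ {−1, +1}), trace(D R D K) ≥ trace(R K); equivalently the Gaussian log-likelihood ℓ(K; R) = log det K − trace(RK) satisfies ℓ(K; R) ≥ ℓ(K; DRD). -/
import Mathlib

/-- For `R` entrywise nonnegative and `K` with nonpositive off-diagonal entries, any
diagonal sign switch `D` (with `D i i = ±1`) satisfies `trace(R K) ≤ trace(D R D K)`;
equivalently, the Gaussian log-likelihood satisfies `ℓ(K; R) ≥ ℓ(K; D R D)`. -/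
theorem sign_switch_trace_ineq {p : ℕ} (R K : Matrix (Fin p) (Fin p) ℝ)
    (hRsym : R.IsSymm) (hKsym : K.IsSymm)
    (hR : ∀ i j, 0 ≤ R i j) (hK : ∀ i j, i ≠ j → K i j ≤ 0)
    (d : Fin p → ℝ) (hd : ∀ i, d i = 1 ∨ d i = -1) :
    (R * K).trace ≤ (Matrix.diagonal d * R * Matrix.diagonal d * K).trace := by
  have hDRD : Matrix.diagonal d * R * Matrix.diagonal d =
      Matrix.of (fun i j => d i * d j * R i j) := by
    ext i j
    simp [Matrix.mul_apply, Matrix.diagonal, Finset.sum_ite_eq, Finset.sum_ite_eq',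
      mul_comm, mul_assoc, mul_left_comm]
  rw [hDRD]
  simp only [Matrix.trace, Matrix.diag, Matrix.mul_apply, Matrix.of_apply]
  rw [← Finset.sum_product', ← Finset.sum_product']
  apply Finset.sum_le_sum
  rintro ⟨i, j⟩ -
  simp only
  rcases eq_or_ne i j with rfl | hij
  · have : d i * d i = 1 := by rcases hd i with h | h <;> rw [h] <;> ring
    rw [show d i * d i * R i i = R i i by rw [this, one_mul]]
  · have h1 : d i * d j ≤ 1 := by
      rcases hd i with h | h <;> rcases hd j with h' | h' <;> rw [h, h'] <;> norm_num
    have h2 : K j i ≤ 0 := hK j i (Ne.symm hij)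
    nlinarith [mul_nonneg (mul_nonneg (sub_nonneg.2 h1) (hR i j)) (neg_nonneg.2 h2)]
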